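/- If a strictly feasible pair exists, then at every minimizer (p*, y*) of the multi-slot network delay, for every node n, every slot i, and any two data links l, m outgoing from n, the marginal quantities are equal: g_l(p*_{l,i}) = g_m(p*_{m,i}), where g_l(p) = (t_l/(2σ_l)) · ((1/2)·ln(1 + p/σ_l) − t_l)^{−2} · (1 + p/σ_l)^{−1}. -/

import Mathlib

open BigOperators ENNReal

/-- A multi-slot energy harvesting network with energy cooperation: nodes `N`, data
links `L` (start node, fixed flow `t l > 0`, noise power `σ l > 0`), energy links `Q`
(start node, end node, efficiency `α q ∈ (0,1]`), `T` time slots and harvested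
energies `E n i ≥ 0` at node `n` in slot `i`. -/
structure NetT where
  N : Type
  L : Type
  Q : Type
  [fintypeN : Fintype N]
  [fintypeL : Fintype L]
  [fintypeQ : Fintype Q]
  [decEqN : DecidableEq N]
  T : ℕ
  startD : L → N
  startE : Q → N
  endE : Q → N
  α : Q → ℝ
  t : L → ℝ
  σ : L → ℝ
  E : N → Fin T → ℝ
  hα : ∀ q, 0 < α q ∧ α q ≤ 1
  ht : ∀ l, 0 < t l
  hσ : ∀ l, 0 < σ l
  hE : ∀ n i, 0 ≤ E n i

attribute [instance] NetT.fintypeN NetT.fintypeL NetT.fintypeQ NetT.decEqN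

/-- Feasibility of `(p, y)`: nonnegative energy transfers, link powers at least
`σ_l (e^{2 t_l} − 1)` in every slot, and the cumulative (energy-causality)
constraint at every node `n` and every slot `k`. -/
def NetT.Feasible (net : NetT) (p : net.L → Fin net.T → ℝ)
    (y : net.Q → Fin net.T → ℝ) : Prop :=
  (∀ q i, 0 ≤ y q i) ∧
  (∀ l i, net.σ l * (Real.exp (2 * net.t l) - 1) ≤ p l i) ∧
  (∀ (n : net.N) (k : Fin net.T),
    (∑ i ∈ Finset.Iic k,
      ((∑ l ∈ Finset.univ.filter (fun l => net.startD l = n), p l i) +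
        (∑ q ∈ Finset.univ.filter (fun q => net.startE q = n), y q i))) ≤
    ∑ i ∈ Finset.Iic k,
      (net.E n i + ∑ q ∈ Finset.univ.filter (fun q => net.endE q = n), net.α q * y q i))

/-- Strict feasibility: feasible with `p_{l,i} > σ_l (e^{2 t_l} − 1)` for all `l, i`. -/
def NetT.StrictFeasible (net : NetT) (p : net.L → Fin net.T → ℝ)
    (y : net.Q → Fin net.T → ℝ) : Prop :=
  net.Feasible p y ∧ ∀ l i, net.σ l * (Real.exp (2 * net.t l) - 1) < p l i

/-- The multi-slot network delay, `+∞` if some denominator is nonpositive. -/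
noncomputable def NetT.Delay (net : NetT) (p : net.L → Fin net.T → ℝ) : ℝ≥0∞ :=
  if ∀ l i, net.t l < (1 / 2) * Real.log (1 + p l i / net.σ l) then
    ENNReal.ofReal
      (∑ i, ∑ l, net.t l / ((1 / 2) * Real.log (1 + p l i / net.σ l) - net.t l))
  else ⊤

/-- A minimizer of the multi-slot network delay over feasible pairs. -/
def NetT.IsMinimizer (net : NetT) (p : net.L → Fin net.T → ℝ)
    (y : net.Q → Fin net.T → ℝ) : Prop :=
  net.Feasible p y ∧ ∀ p' y', net.Feasible p' y' → net.Delay p ≤ net.Delay p'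

/-- The marginal quantity
`g(p) = (t/(2σ)) · ((1/2)·ln(1 + p/σ) − t)^{−2} · (1 + p/σ)^{−1}`. -/
noncomputable def gMarg (t σ p : ℝ) : ℝ :=
  t / (2 * σ) / ((1 / 2) * Real.log (1 + p / σ) - t) ^ 2 / (1 + p / σ)

lemma gap_to_log {t σ p : ℝ} (hσ : 0 < σ) (h : σ * (Real.exp (2 * t) - 1) < p) :
    t < (1 / 2) * Real.log (1 + p / σ) := by
  have h1 : Real.exp (2 * t) - 1 < p / σ := (lt_div_iff₀ hσ).mpr (by linarith)
  have hX : Real.exp (2 * t) < 1 + p / σ := by linarith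
  have hXpos : (0:ℝ) < 1 + p / σ := lt_trans (Real.exp_pos _) hX
  have := (Real.lt_log_iff_exp_lt hXpos).mpr hX
  linarith

lemma log_to_gap {t σ p : ℝ} (hσ : 0 < σ)
    (hfe : σ * (Real.exp (2 * t) - 1) ≤ p)
    (h : t < (1 / 2) * Real.log (1 + p / σ)) :
    σ * (Real.exp (2 * t) - 1) < p := by
  have h1 : Real.exp (2 * t) - 1 ≤ p / σ := (le_div_iff₀ hσ).mpr (by linarith)
  have hXpos : (0:ℝ) < 1 + p / σ := lt_of_lt_of_le (Real.exp_pos _) (by linarith)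
  have h2 : Real.exp (2 * t) < 1 + p / σ := by
    have := (Real.lt_log_iff_exp_lt hXpos).mp (by linarith : 2 * t < Real.log (1 + p / σ))
    exact this
  have : Real.exp (2 * t) - 1 < p / σ := by linarith
  calc σ * (Real.exp (2 * t) - 1) < σ * (p / σ) := by
        exact (mul_lt_mul_iff_right₀ hσ).mpr this
    _ = p := by field_simp

lemma Xpos_of_gap {t σ p : ℝ} (hσ : 0 < σ) (h : σ * (Real.exp (2 * t) - 1) < p) :
    0 < 1 + p / σ := by
  have h1 : Real.exp (2 * t) - 1 < p / σ := (lt_div_iff₀ hσ).mpr (by linarith)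
  linarith [Real.exp_pos (2 * t)]

lemma hasDerivAt_Fdel {t σ x : ℝ} (hσ : 0 < σ) (hX : 0 < 1 + x / σ)
    (hD : t < (1 / 2) * Real.log (1 + x / σ)) :
    HasDerivAt (fun z => t / ((1 / 2) * Real.log (1 + z / σ) - t))
      (-(gMarg t σ x)) x := by
  have hDne : (1 / 2) * Real.log (1 + x / σ) - t ≠ 0 := by
    have : 0 < (1 / 2) * Real.log (1 + x / σ) - t := by linarith
    exact this.ne'
  have h1 : HasDerivAt (fun z : ℝ => 1 + z / σ) (1 / σ) x := by
    simpa using ((hasDerivAt_id x).div_const σ).const_add 1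
  have h2 := h1.log hX.ne'
  have h3 : HasDerivAt (fun z => (1 / 2) * Real.log (1 + z / σ) - t)
      ((1 / 2) * (1 / σ / (1 + x / σ))) x := (h2.const_mul (1 / 2)).sub_const t
  have h4 := (hasDerivAt_const x t).div h3 hDne
  refine h4.congr_deriv ?_
  symm
  unfold gMarg
  set X : ℝ := 1 + x / σ with hXdef
  set D : ℝ := (1 / 2) * Real.log X - t with hDdef
  field_simp
  ring

/-- If a strictly feasible pair exists, then at every minimizer
`(p*, y*)` of the multi-slot network delay, for every node `n`, every slot `i`, and
any two data links `l, m` outgoing from `n`, `g_l(p*_{l,i}) = g_m(p*_{m,i})`. -/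
theorem multislot_minimizer_equal_marginals (net : NetT)
    (hsf : ∃ p y, net.StrictFeasible p y)
    (pstar : net.L → Fin net.T → ℝ) (ystar : net.Q → Fin net.T → ℝ)
    (hmin : net.IsMinimizer pstar ystar) :
    ∀ (n : net.N) (i : Fin net.T) (l m : net.L),
      net.startD l = n → net.startD m = n →
      gMarg (net.t l) (net.σ l) (pstar l i) = gMarg (net.t m) (net.σ m) (pstar m i) := by
  intro n i l m hl hm
  by_cases hlm : l = m
  · subst hlm; rfl
  classical
  obtain ⟨p0, y0, hp0f, hp0s⟩ := hsf
  obtain ⟨hfeas, hminle⟩ := hmin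
  have H0 : ∀ l' i', net.t l' < (1 / 2) * Real.log (1 + p0 l' i' / net.σ l') :=
    fun l' i' => gap_to_log (net.hσ l') (hp0s l' i')
  have hD0 : net.Delay p0 ≠ ⊤ := by
    rw [NetT.Delay, if_pos H0]; exact ofReal_ne_top
  have hDs : net.Delay pstar ≠ ⊤ := ne_top_of_le_ne_top hD0 (hminle p0 y0 hp0f)
  have Hstar : ∀ l' i', net.t l' < (1 / 2) * Real.log (1 + pstar l' i' / net.σ l') := by
    by_contra hc
    rw [NetT.Delay, if_neg hc] at hDs; exact hDs rfl
  have hgap : ∀ l' i', net.σ l' * (Real.exp (2 * net.t l') - 1) < pstar l' i' :=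
    fun l' i' => log_to_gap (net.hσ l') (hfeas.2.1 l' i') (Hstar l' i')
  set a := pstar l i with ha
  set b := pstar m i with hb
  set δ := min (a - net.σ l * (Real.exp (2 * net.t l) - 1))
      (b - net.σ m * (Real.exp (2 * net.t m) - 1)) with hδ
  have hδpos : 0 < δ := lt_min (by linarith [hgap l i]) (by linarith [hgap m i])
  set P : ℝ → net.L → Fin net.T → ℝ := fun ε l' i' =>
    pstar l' i' + (if i' = i then ((if l' = l then ε else 0) - (if l' = m then ε else 0)) else 0)
    with hP
  have hPl : ∀ ε, P ε l i = a + ε := by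
    intro ε; simp [hP, hlm, ha]
  have hPm : ∀ ε, P ε m i = b - ε := by
    intro ε; simp [hP, Ne.symm hlm, hb, sub_eq_add_neg]
  have hPoth : ∀ ε l' i', l' ≠ l → l' ≠ m → P ε l' i' = pstar l' i' := by
    intro ε l' i' h1 h2; simp [hP, h1, h2]
  have hPslot : ∀ ε l' (i' : Fin net.T), i' ≠ i → P ε l' i' = pstar l' i' := by
    intro ε l' i' h1; simp [hP, h1]
  -- sums over outgoing links preserved
  have hsum : ∀ ε (n' : net.N) (i' : Fin net.T),
      ∑ l' ∈ Finset.univ.filter (fun l' => net.startD l' = n'), P ε l' i'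
        = ∑ l' ∈ Finset.univ.filter (fun l' => net.startD l' = n'), pstar l' i' := by
    intro ε n' i'
    by_cases hi : i' = i
    · rw [hi]
      have hexp : ∀ l', P ε l' i
          = pstar l' i + ((if l' = l then ε else 0) - (if l' = m then ε else 0)) := by
        intro l'; simp [hP]
      rw [Finset.sum_congr rfl fun l' _ => hexp l']
      rw [Finset.sum_add_distrib, Finset.sum_sub_distrib]
      rw [Finset.sum_ite_eq' _ l (fun _ => ε), Finset.sum_ite_eq' _ m (fun _ => ε)]
      simp [hl, hm]
    · refine Finset.sum_congr rfl fun l' _ => hPslot ε l' i' hi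
  -- feasibility of perturbed powers
  have hPfeas : ∀ ε, |ε| < δ → net.Feasible (P ε) ystar := by
    intro ε hε
    rcases abs_lt.mp hε with ⟨h1, h2⟩
    refine ⟨hfeas.1, ?_, ?_⟩
    · intro l' i'
      by_cases hi : i' = i
      · rw [hi]
        by_cases h'l : l' = l
        · rw [h'l, hPl]
          have hm1 := min_le_left (a - net.σ l * (Real.exp (2 * net.t l) - 1))
            (b - net.σ m * (Real.exp (2 * net.t m) - 1))
          linarith
        by_cases h'm : l' = m
        · rw [h'm, hPm]
          have hm2 := min_le_right (a - net.σ l * (Real.exp (2 * net.t l) - 1))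
            (b - net.σ m * (Real.exp (2 * net.t m) - 1))
          linarith
        · rw [hPoth ε l' i h'l h'm]; exact hfeas.2.1 l' i
      · rw [hPslot ε l' i' hi]; exact hfeas.2.1 l' i'
    · intro n' k
      have := hfeas.2.2 n' k
      calc ∑ i' ∈ Finset.Iic k,
            ((∑ l' ∈ Finset.univ.filter (fun l' => net.startD l' = n'), P ε l' i') +
              (∑ q ∈ Finset.univ.filter (fun q => net.startE q = n'), ystar q i'))
          = ∑ i' ∈ Finset.Iic k,
            ((∑ l' ∈ Finset.univ.filter (fun l' => net.startD l' = n'), pstar l' i') +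
              (∑ q ∈ Finset.univ.filter (fun q => net.startE q = n'), ystar q i')) := by
            exact Finset.sum_congr rfl fun i' _ => by rw [hsum ε n' i']
        _ ≤ _ := this
  -- strict gap for perturbed powers
  have hPgap : ∀ ε, |ε| < δ → ∀ l' i',
      net.σ l' * (Real.exp (2 * net.t l') - 1) < P ε l' i' := by
    intro ε hε l' i'
    rcases abs_lt.mp hε with ⟨h1, h2⟩
    by_cases hi : i' = i
    · rw [hi]
      by_cases h'l : l' = l
      · rw [h'l, hPl]
        have hm1 := min_le_left (a - net.σ l * (Real.exp (2 * net.t l) - 1))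
          (b - net.σ m * (Real.exp (2 * net.t m) - 1))
        linarith
      by_cases h'm : l' = m
      · rw [h'm, hPm]
        have hm2 := min_le_right (a - net.σ l * (Real.exp (2 * net.t l) - 1))
          (b - net.σ m * (Real.exp (2 * net.t m) - 1))
        linarith
      · rw [hPoth ε l' i h'l h'm]; exact hgap l' i
    · rw [hPslot ε l' i' hi]; exact hgap l' i'
  have HP : ∀ ε, |ε| < δ → ∀ l' i',
      net.t l' < (1 / 2) * Real.log (1 + P ε l' i' / net.σ l') :=
    fun ε hε l' i' => gap_to_log (net.hσ l') (hPgap ε hε l' i')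
  -- real sums
  set F : net.L → ℝ → ℝ :=
    fun l' x => net.t l' / ((1 / 2) * Real.log (1 + x / net.σ l') - net.t l') with hF
  have hSnn : ∀ p : net.L → Fin net.T → ℝ,
      (∀ l' i', net.t l' < (1 / 2) * Real.log (1 + p l' i' / net.σ l')) →
      0 ≤ ∑ i', ∑ l', F l' (p l' i') := by
    intro p hp
    refine Finset.sum_nonneg fun i' _ => Finset.sum_nonneg fun l' _ => ?_
    have hd : 0 < (1 / 2) * Real.log (1 + p l' i' / net.σ l') - net.t l' := by
      linarith [hp l' i']
    exact div_nonneg (net.ht l').le hd.le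
  have hcomp : ∀ ε, |ε| < δ →
      (∑ i', ∑ l', F l' (pstar l' i')) ≤ ∑ i', ∑ l', F l' (P ε l' i') := by
    intro ε hε
    have h1 := hminle (P ε) ystar (hPfeas ε hε)
    rw [NetT.Delay, if_pos Hstar, NetT.Delay, if_pos (HP ε hε)] at h1
    exact (ENNReal.ofReal_le_ofReal_iff (hSnn _ (HP ε hε))).mp h1
  set φ : ℝ → ℝ := fun ε => F l (a + ε) + F m (b - ε) with hφdef
  have hSdiff : ∀ ε,
      (∑ i', ∑ l', F l' (P ε l' i')) - (∑ i', ∑ l', F l' (pstar l' i')) = φ ε - φ 0 := by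
    intro ε
    have step1 : (∑ i', ∑ l', F l' (P ε l' i')) - (∑ i', ∑ l', F l' (pstar l' i'))
        = ∑ i', ∑ l', (F l' (P ε l' i') - F l' (pstar l' i')) := by
      rw [← Finset.sum_sub_distrib]
      exact Finset.sum_congr rfl fun i' _ => (Finset.sum_sub_distrib _ _).symm
    rw [step1]
    have step2 : ∑ i' : Fin net.T, ∑ l', (F l' (P ε l' i') - F l' (pstar l' i'))
        = ∑ l', (F l' (P ε l' i) - F l' (pstar l' i)) := by
      refine Finset.sum_eq_single_of_mem i (Finset.mem_univ i) fun j _ hj => ?_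
      refine Finset.sum_eq_zero fun l' _ => ?_
      rw [hPslot ε l' j hj, sub_self]
    rw [step2]
    have step3 : ∑ l', (F l' (P ε l' i) - F l' (pstar l' i))
        = ∑ l' ∈ ({l, m} : Finset net.L), (F l' (P ε l' i) - F l' (pstar l' i)) := by
      symm
      refine Finset.sum_subset (Finset.subset_univ _) fun x _ hx => ?_
      simp only [Finset.mem_insert, Finset.mem_singleton, not_or] at hx
      rw [hPoth ε x i hx.1 hx.2, sub_self]
    rw [step3, Finset.sum_pair hlm, hPl, hPm]
    simp only [hφdef, add_zero, sub_zero]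
    ring
  -- local minimum of φ at 0
  have hlocmin : IsLocalMin φ 0 := by
    have hmem : Set.Ioo (-δ) δ ∈ nhds (0:ℝ) := Ioo_mem_nhds (neg_lt_zero.mpr hδpos) hδpos
    refine Filter.eventually_of_mem hmem fun ε hε => ?_
    have habs : |ε| < δ := abs_lt.mpr ⟨hε.1, hε.2⟩
    have h1 := hcomp ε habs
    have h2 := hSdiff ε
    linarith
  -- derivative of φ at 0
  have hXa : 0 < 1 + a / net.σ l := Xpos_of_gap (net.hσ l) (hgap l i)
  have hXb : 0 < 1 + b / net.σ m := Xpos_of_gap (net.hσ m) (hgap m i)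
  have hfl : HasDerivAt (F l) (-(gMarg (net.t l) (net.σ l) a)) a :=
    hasDerivAt_Fdel (net.hσ l) hXa (Hstar l i)
  have hfm : HasDerivAt (F m) (-(gMarg (net.t m) (net.σ m) b)) b :=
    hasDerivAt_Fdel (net.hσ m) hXb (Hstar m i)
  have hinner1 : HasDerivAt (fun ε : ℝ => a + ε) 1 (0:ℝ) := by
    simpa using (hasDerivAt_id (0:ℝ)).const_add a
  have hinner2 : HasDerivAt (fun ε : ℝ => b - ε) (-1) (0:ℝ) := by
    simpa using (hasDerivAt_id (0:ℝ)).const_sub b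
  have hfl0 : HasDerivAt (F l) (-(gMarg (net.t l) (net.σ l) a)) ((fun ε : ℝ => a + ε) 0) := by
    simpa using hfl
  have hfm0 : HasDerivAt (F m) (-(gMarg (net.t m) (net.σ m) b)) ((fun ε : ℝ => b - ε) 0) := by
    simpa using hfm
  have hc1 : HasDerivAt (fun ε : ℝ => F l (a + ε)) (-(gMarg (net.t l) (net.σ l) a) * 1) 0 :=
    hfl0.comp 0 hinner1
  have hc2 : HasDerivAt (fun ε : ℝ => F m (b - ε)) (-(gMarg (net.t m) (net.σ m) b) * (-1)) 0 :=
    hfm0.comp 0 hinner2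
  have hφder : HasDerivAt φ
      (-(gMarg (net.t l) (net.σ l) a) * 1 + -(gMarg (net.t m) (net.σ m) b) * (-1)) 0 :=
    hc1.add hc2
  have hzero := hlocmin.hasDerivAt_eq_zero hφder
  have : gMarg (net.t l) (net.σ l) a = gMarg (net.t m) (net.σ m) b := by linarith
  simpa [ha, hb] using this
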